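/- Let k ≥ 1 and m, n be natural numbers with k·n ≤ m and m + n > 0. Let B_k be the set of lists of Booleans containing exactly m values true and n values false such that in every nonempty prefix the number of true entries strictly exceeds k times the number of false entries. Then (m + n) · |B_k| = (m − k·n) · binom(m + n, m). (Barbier's generalization of the ballot problem, 1887.) -/

import Mathlib

def SB (k m n : ℕ) : Set (List Bool) :=
  {l : List Bool | l.count true = m ∧ l.count false = n ∧
    ∀ j : ℕ, 1 ≤ j → j ≤ l.length →
      k * (l.take j).count false < (l.take j).count true}

lemma SB_length {k m n : ℕ} {l : List Bool} (h : l ∈ SB k m n) : l.length = m + n := by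
  obtain ⟨h1, h2, -⟩ := h
  have := List.length_eq_countP_add_countP (· == true) (l := l)
  rw [List.count] at h1 h2
  rw [this, h1]
  congr 1
  rw [← h2]
  apply List.countP_congr
  intro x _
  cases x <;> simp

lemma SB_finite (k m n : ℕ) : (SB k m n).Finite :=
  (List.finite_length_eq Bool (m + n)).subset fun _ h => SB_length h


lemma SB_empty {k m n : ℕ} (hm : m ≤ k * n) (hpos : 0 < m + n) : SB k m n = ∅ := by
  ext l
  simp only [Set.mem_empty_iff_false, iff_false]
  intro hl
  have hlen := SB_length hl
  obtain ⟨h1, h2, h3⟩ := hl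
  have := h3 l.length (by omega) le_rfl
  rw [List.take_length, h1, h2] at this
  omega

lemma SB_zero (k m : ℕ) : SB k m 0 = {List.replicate m true} := by
  ext l
  simp only [Set.mem_singleton_iff]
  constructor
  · intro hl
    have hlen := SB_length hl
    obtain ⟨h1, h2, -⟩ := hl
    rw [List.eq_replicate_iff]
    refine ⟨by omega, fun b hb => ?_⟩
    cases b
    · exact absurd (List.count_pos_iff.2 hb) (by omega)
    · rfl
  · rintro rfl
    refine ⟨by simp, by simp [List.count_replicate], fun j hj hjl => ?_⟩
    simp only [List.length_replicate] at hjl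
    have e1 : ((List.replicate m true).take j).count false = 0 := by
      simp [List.take_replicate, List.count_replicate]
    have e2 : ((List.replicate m true).take j).count true = min j m := by
      simp [List.take_replicate, List.count_replicate]
    rw [e1, e2]
    omega

lemma SB_rec (k m n : ℕ) (h : k * (n + 1) < m + 1) :
    SB k (m + 1) (n + 1) =
      (· ++ [true]) '' SB k m (n + 1) ∪ (· ++ [false]) '' SB k (m + 1) n := by
  ext l
  constructor
  · intro hl
    have hlen := SB_length hl
    have hne : l ≠ [] := by intro h'; rw [h'] at hlen; simp at hlen
    obtain ⟨h1, h2, h3⟩ := hl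
    have hdec := List.dropLast_append_getLast hne
    have hdl : ∀ j : ℕ, 1 ≤ j → j ≤ l.dropLast.length →
        k * (l.dropLast.take j).count false < (l.dropLast.take j).count true := by
      intro j hj hjl
      have hjl' : j ≤ l.length := by rw [List.length_dropLast] at hjl; omega
      have : l.take j = l.dropLast.take j := by
        conv_lhs => rw [← hdec]
        rw [List.take_append_of_le_length hjl]
      have := h3 j hj hjl'
      rwa [‹l.take j = l.dropLast.take j›] at this
    cases hb : l.getLast hne with
    | true =>
      left
      refine ⟨l.dropLast, ⟨?_, ?_, hdl⟩, by rw [← hb]; exact hdec⟩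
      · have : l.count true = l.dropLast.count true + 1 := by
          conv_lhs => rw [← hdec, hb]
          simp [List.count_append]
        omega
      · have : l.count false = l.dropLast.count false := by
          conv_lhs => rw [← hdec, hb]
          simp [List.count_append]
        omega
    | false =>
      right
      refine ⟨l.dropLast, ⟨?_, ?_, hdl⟩, by rw [← hb]; exact hdec⟩
      · have : l.count true = l.dropLast.count true := by
          conv_lhs => rw [← hdec, hb]
          simp [List.count_append]
        omega
      · have : l.count false = l.dropLast.count false + 1 := by
          conv_lhs => rw [← hdec, hb]
          simp [List.count_append]
        omega
  · rintro (⟨l', hl', rfl⟩ | ⟨l', hl', rfl⟩) <;>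
    · have hlen := SB_length hl'
      obtain ⟨h1, h2, h3⟩ := hl'
      refine ⟨by simp [List.count_append, h1], by simp [List.count_append, h2],
        fun j hj hjl => ?_⟩
      simp only [List.length_append, List.length_singleton] at hjl
      rcases Nat.lt_or_ge j (l'.length + 1) with hlt | hge
      · have hle : j ≤ l'.length := by omega
        rw [List.take_append_of_le_length hle]
        exact h3 j hj hle
      · have : j = l'.length + 1 := by omega
        subst this
        rw [List.take_of_length_le (by simp)]
        simp [List.count_append, h1, h2]
        omega

lemma SB_ncard_rec (k m n : ℕ) (h : k * (n + 1) < m + 1) :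
    (SB k (m + 1) (n + 1)).ncard = (SB k m (n + 1)).ncard + (SB k (m + 1) n).ncard := by
  have inj1 : Function.Injective (· ++ [true] : List Bool → List Bool) :=
    fun a b hab => List.append_cancel_right hab
  have inj2 : Function.Injective (· ++ [false] : List Bool → List Bool) :=
    fun a b hab => List.append_cancel_right hab
  have disj : Disjoint ((· ++ [true]) '' SB k m (n + 1)) ((· ++ [false]) '' SB k (m + 1) n) := by
    rw [Set.disjoint_left]
    rintro x ⟨a, -, rfl⟩ ⟨b, -, hb⟩
    have := congrArg List.getLast? hb
    simp [List.getLast?_concat] at this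
  rw [SB_rec k m n h,
    Set.ncard_union_eq disj ((SB_finite k m (n + 1)).image _) ((SB_finite k (m + 1) n).image _),
    Set.ncard_image_of_injective _ inj1, Set.ncard_image_of_injective _ inj2]

lemma aux (k : ℕ) (hk : 1 ≤ k) : ∀ N m n : ℕ, m + n = N → k * n ≤ m →
    (m + n) * (SB k m n).ncard = (m - k * n) * Nat.choose (m + n) m := by
  intro N
  induction N using Nat.strong_induction_on with
  | _ N ih =>
  intro m n hN hkn
  rcases Nat.eq_zero_or_pos (m + n) with h0 | h0
  · simp [h0]
    exact Or.inl (by omega)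
  rcases Nat.lt_or_ge (k * n) m with hlt | hge
  swap
  · rw [SB_empty hge h0]
    simp
    omega
  cases n with
  | zero =>
    rw [SB_zero]
    simp [Nat.choose_self]
  | succ n' =>
    obtain ⟨m', rfl⟩ : ∃ m', m = m' + 1 := ⟨m - 1, by omega⟩
    have hrec := SB_ncard_rec k m' n' hlt
    set A := (SB k m' (n' + 1)).ncard with hA
    set B := (SB k (m' + 1) n').ncard with hB
    have IH1 := ih (m' + n' + 1) (by omega) m' (n' + 1) (by omega) (by omega)
    have IH2 := ih (m' + n' + 1) (by omega) (m' + 1) n' (by omega) (by nlinarith)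
    rw [show m' + (n' + 1) = m' + n' + 1 from by ring] at IH1
    rw [show m' + 1 + n' = m' + n' + 1 from by ring] at IH2
    have key1 := Nat.add_one_mul_choose_eq (m' + n' + 1) m'
    have key2 := Nat.add_one_mul_choose_eq (m' + n' + 1) n'
    have sym1 : Nat.choose (m' + n' + 1) n' = Nat.choose (m' + n' + 1) (m' + 1) := by
      rw [← Nat.choose_symm (show m' + 1 ≤ m' + n' + 1 by omega)]
      congr 1
      omega
    have sym2 : Nat.choose (m' + n' + 2) (n' + 1) = Nat.choose (m' + n' + 2) (m' + 1) := by
      rw [← Nat.choose_symm (show m' + 1 ≤ m' + n' + 2 by omega)]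
      congr 1
      omega
    rw [sym1, sym2] at key2
    rw [← hA] at IH1
    rw [← hB] at IH2
    rw [show m' + 1 + (n' + 1) = m' + n' + 2 from by ring, hrec]
    apply Nat.eq_of_mul_eq_mul_left (show 0 < m' + n' + 1 by omega)
    have hs1 : k * (n' + 1) ≤ m' := by omega
    have hs2 : k * n' ≤ m' + 1 := by nlinarith
    have hs3 : k * (n' + 1) ≤ m' + 1 := by omega
    zify [hs1, hs2, hs3] at IH1 IH2 ⊢
    zify at key1 key2
    linear_combination ((m' : ℤ) + n' + 2) * IH1 + ((m' : ℤ) + n' + 2) * IH2 +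
      ((m' : ℤ) - k * (n' + 1)) * key1 + ((m' : ℤ) + 1 - k * n') * key2

/-- Barbier's generalization of the ballot problem (1887): with `k ≥ 1`, `k·n ≤ m`
and `m + n > 0`, if `B_k` is the set of Boolean lists with exactly `m` trues and `n`
falses in which every nonempty prefix has strictly more trues than `k` times the
number of falses, then `(m + n) · |B_k| = (m − k·n) · binom(m + n, m)`. -/
theorem ballot_barbier (k m n : ℕ) (hk : 1 ≤ k) (hkn : k * n ≤ m) (hpos : 0 < m + n) :
    (m + n) * {l : List Bool | l.count true = m ∧ l.count false = n ∧
        ∀ j : ℕ, 1 ≤ j → j ≤ l.length →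
          k * (l.take j).count false < (l.take j).count true}.ncard
      = (m - k * n) * Nat.choose (m + n) m :=
  aux k hk (m + n) m n rfl hkn
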